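/- Let h : ℝⁿ → ℝ satisfy h(g) = max_{C ∈ E_*} min_{w ∈ C} ⟨w, g⟩ for all g, where E_* is a nonempty family of nonempty convex compact sets. Then h(g) ≤ 0 for all g ∈ ℝⁿ if and only if 0 ∈ C for every C ∈ E_*. -/

import Mathlib

open Set

/-- for a function represented by a lower exhauster (max of min of linear
functions), nonpositivity everywhere is equivalent to every set of the exhauster containing
the origin. -/
theorem lower_exhauster_nonpos_iff {n : ℕ} (h : EuclideanSpace ℝ (Fin n) → ℝ)
    (Elow : Set (Set (EuclideanSpace ℝ (Fin n))))
    (hne : Elow.Nonempty)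
    (hsets : ∀ C ∈ Elow, C.Nonempty ∧ Convex ℝ C ∧ IsCompact C)
    (hrep : ∀ g : EuclideanSpace ℝ (Fin n),
      IsGreatest ((fun C => sInf ((fun w => (inner ℝ w g : ℝ)) '' C)) '' Elow) (h g)) :
    (∀ g, h g ≤ 0) ↔ ∀ C ∈ Elow, (0 : EuclideanSpace ℝ (Fin n)) ∈ C := by
  constructor
  · intro hnp C hC
    by_contra h0
    obtain ⟨hCne, hCconv, hCcomp⟩ := hsets C hC
    obtain ⟨f, u, hf0, hfb⟩ :=
      geometric_hahn_banach_point_closed hCconv hCcomp.isClosed h0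
    obtain ⟨g, hg⟩ := (InnerProductSpace.toDual ℝ (EuclideanSpace ℝ (Fin n))).surjective f
    simp only [map_zero] at hf0
    have hbound : ∀ x ∈ (fun w => (inner ℝ w g : ℝ)) '' C, u ≤ x := by
      rintro x ⟨w, hw, rfl⟩
      have := hfb w hw
      rw [← hg] at this
      simp only [InnerProductSpace.toDual_apply_apply] at this
      simpa [real_inner_comm w g] using this.le
    have hinf : u ≤ sInf ((fun w => (inner ℝ w g : ℝ)) '' C) :=
      le_csInf (hCne.image _) hbound
    have hmem : sInf ((fun w => (inner ℝ w g : ℝ)) '' C) ∈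
        (fun C => sInf ((fun w => (inner ℝ w g : ℝ)) '' C)) '' Elow := ⟨C, hC, rfl⟩
    have := (hrep g).2 hmem
    have : u ≤ h g := hinf.trans this
    linarith [hnp g, hf0]
  · intro h0 g
    obtain ⟨C, hC, hCeq⟩ := (hrep g).1
    have hCcomp := (hsets C hC).2.2
    have hbdd : BddBelow ((fun w => (inner ℝ w g : ℝ)) '' C) :=
      (hCcomp.image (Continuous.inner continuous_id continuous_const)).bddBelow
    have : sInf ((fun w => (inner ℝ w g : ℝ)) '' C) ≤ (inner ℝ (0 : EuclideanSpace ℝ (Fin n)) g : ℝ) :=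
      csInf_le hbdd ⟨0, h0 C hC, rfl⟩
    rw [← hCeq]
    simpa using this
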